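/- Let k be an algebraically closed field of characteristic zero, X a finite set with a preorder ≤, and V the k-vector space with basis (e_x)_{x∈X}. Then pre(GL_≥(X)) equals ≤; that is, for all x, y ∈ X: x ≤ y if and only if every subset Y ⊆ X such that ⟨Y⟩ is invariant under all g ∈ GL_≥(X) and x ∈ Y also satisfies y ∈ Y. -/

import Mathlib

/-- Let `k` be an algebraically closed field of characteristic zero, `X` a finite
preordered set, and `V` a `k`-vector space with basis `(e_x)_{x ∈ X}`. Then
`pre(GL_≥(X))` equals the original preorder: `x ≤ y` iff every subset `Y ⊆ X`
whose span is invariant under all `g ∈ GL_≥(X)` and which contains `x` also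
contains `y`. -/
theorem pre_of_GL_of_preorder
    {k V X : Type*} [Field k] [IsAlgClosed k] [CharZero k]
    [AddCommGroup V] [Module k V] [Finite X] [Preorder X] (b : Module.Basis X k V) :
    ∀ x y : X, x ≤ y ↔
      ∀ Y : Set X,
        (∀ g : V ≃ₗ[k] V,
          (∀ z : X, (Submodule.span k (b '' {w | z ≤ w})).map (g : V →ₗ[k] V) ≤
              Submodule.span k (b '' {w | z ≤ w})) →
          (Submodule.span k (b '' Y)).map (g : V →ₗ[k] V) ≤
            Submodule.span k (b '' Y)) →
        x ∈ Y → y ∈ Y := by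
  classical
  intro x y
  constructor
  · intro hxy Y hY hxY
    by_cases hne : x = y
    · exact hne ▸ hxY
    have hrep : b.repr (b y) x = 0 := by
      rw [Module.Basis.repr_self, Finsupp.single_eq_of_ne hne]
    set s : V →ₗ[k] V := (b.coord x).smulRight (b y) with hs
    have hsv : ∀ v, s v = b.repr v x • b y := fun v => by
      simp [hs, Module.Basis.coord_apply]
    have h2 : ∀ v, s (s v) = 0 := fun v => by
      rw [hsv v, map_smul, hsv, hrep, zero_smul, smul_zero]
    set g : V ≃ₗ[k] V := LinearEquiv.ofLinear (LinearMap.id + s) (LinearMap.id - s)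
      (by
        ext v
        simp only [LinearMap.comp_apply, LinearMap.add_apply, LinearMap.sub_apply,
          LinearMap.id_apply, map_sub, map_add, h2, sub_zero, add_zero]
        abel)
      (by
        ext v
        simp only [LinearMap.comp_apply, LinearMap.add_apply, LinearMap.sub_apply,
          LinearMap.id_apply, map_sub, map_add, h2, sub_zero, add_zero]
        abel)
      with hg
    have hgapp : ∀ v, g v = v + s v := fun v => by
      simp [hg, LinearEquiv.ofLinear_apply]
    have hgb : ∀ w : X, g (b w) = if w = x then b x + b y else b w := by
      intro w
      rw [hgapp, hsv]
      by_cases hw : w = x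
      · subst hw; rw [if_pos rfl, Module.Basis.repr_self, Finsupp.single_eq_same, one_smul]
      · rw [if_neg hw, Module.Basis.repr_self, Finsupp.single_eq_of_ne (Ne.symm hw), zero_smul, add_zero]
    have hginv : ∀ z : X, (Submodule.span k (b '' {w | z ≤ w})).map (g : V →ₗ[k] V) ≤
        Submodule.span k (b '' {w | z ≤ w}) := by
      intro z
      rw [Submodule.map_span, Submodule.span_le]
      rintro _ ⟨_, ⟨w, hw, rfl⟩, rfl⟩
      simp only [SetLike.mem_coe, LinearEquiv.coe_coe]
      rw [hgb]
      by_cases hwx : w = x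
      · rw [if_pos hwx]
        exact Submodule.add_mem _
          (Submodule.subset_span ⟨x, hwx ▸ hw, rfl⟩)
          (Submodule.subset_span ⟨y, le_trans (hwx ▸ hw) hxy, rfl⟩)
      · rw [if_neg hwx]
        exact Submodule.subset_span ⟨w, hw, rfl⟩
    have hbx : b x ∈ Submodule.span k (b '' Y) := Submodule.subset_span ⟨x, hxY, rfl⟩
    have hmem : g (b x) ∈ Submodule.span k (b '' Y) :=
      hY g hginv (Submodule.mem_map_of_mem hbx)
    rw [hgb, if_pos rfl] at hmem
    have hby : b y ∈ Submodule.span k (b '' Y) := by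
      have := Submodule.sub_mem _ hmem hbx
      simpa using this
    exact b.self_mem_span_image.mp hby
  · intro h
    exact h {w | x ≤ w} (fun g hg => hg x) (le_refl x)
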